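/- Let V be a finite type with an adjacency relation A : V → V → Prop and an arc-weight function w : V → V → ℝ, and suppose the graph is acyclic in the sense that there exists a rank function ρ : V → ℕ with ρ y < ρ x whenever A x y. Let init : V → EReal and let f : V → EReal satisfy, for every u ∈ V, f u = min (init u) (⨅ over vertices u' with A u u' of (f u' − (w u u' : EReal))), where the infimum over the empty set is ⊤ (= +∞). Then for every u ∈ V, f u = ⨅ over all paths q starting at u (with arbitrary endpoint z) of (init z − (value(q) : EReal)). -/

import Mathlib

/-- A path from `u` to `v` in the directed graph with adjacency `A`. -/
def IsPath {V : Type*} (A : V → V → Prop) (u v : V) (p : List V) : Prop :=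
  p ≠ [] ∧ p.head? = some u ∧ p.getLast? = some v ∧ List.Chain' A p

/-- The value of a path: sum of arc weights over consecutive pairs. -/
def pathValue {V : Type*} (w : V → V → ℝ) (p : List V) : ℝ :=
  ((p.zip p.tail).map fun x => w x.1 x.2).sum

lemma EReal.iInf_sub_coe {ι : Sort*} (g : ι → EReal) (c : ℝ) :
    (⨅ i, g i) - (c : EReal) = ⨅ i, g i - (c : EReal) := by
  apply le_antisymm
  · exact le_iInf fun i => sub_le_sub (iInf_le _ _) le_rfl
  · rw [EReal.le_sub_iff_add_le (.inl (EReal.coe_ne_bot c)) (.inl (EReal.coe_ne_top c))]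
    refine le_iInf fun i => ?_
    rw [← EReal.le_sub_iff_add_le (.inl (EReal.coe_ne_bot c)) (.inl (EReal.coe_ne_top c))]
    exact iInf_le _ _

lemma EReal.sub_sub_coe (a : EReal) (b c : ℝ) :
    a - (b : EReal) - (c : EReal) = a - ((b + c : ℝ) : EReal) := by
  simp only [sub_eq_add_neg, ← EReal.coe_neg, ← EReal.coe_add, add_assoc]
  congr 1
  norm_cast
  ring

lemma pathValue_cons {V : Type*} (w : V → V → ℝ) (a b : V) (l : List V) :
    pathValue w (a :: b :: l) = w a b + pathValue w (b :: l) := by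
  simp [pathValue]

lemma f_le_path {V : Type*} (A : V → V → Prop) (w : V → V → ℝ)
    (init f : V → EReal)
    (hf : ∀ u, f u = min (init u) (⨅ u' : {u' // A u u'}, (f u' - (w u u' : EReal)))) :
    ∀ (q : List V) (u z : V), IsPath A u z q → f u ≤ init z - (pathValue w q : EReal) := by
  intro q
  induction q with
  | nil => intro u z h; exact absurd rfl h.1
  | cons a l ih =>
    intro u z h
    obtain ⟨-, hh, hl, hc⟩ := h
    simp only [List.head?_cons, Option.some.injEq] at hh
    subst hh
    match l with
    | [] =>
      simp only [List.getLast?_singleton, Option.some.injEq] at hl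
      rw [← hl]
      have : pathValue w [a] = 0 := by simp [pathValue]
      rw [this]
      simpa using (hf a) ▸ min_le_left _ _
    | b :: t =>
      have hab : A a b := (List.isChain_cons_cons.1 hc).1
      have hl' : (b :: t).getLast? = some z := by
        rw [← hl]; simp [List.getLast?_cons_cons]
      have hpath : IsPath A b z (b :: t) :=
        ⟨by simp, by simp, hl', (List.isChain_cons_cons.1 hc).2⟩
      have h1 : f a ≤ f b - (w a b : EReal) := by
        calc f a ≤ ⨅ u' : {u' // A a u'}, (f u' - (w a u' : EReal)) :=
              (hf a) ▸ min_le_right _ _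
          _ ≤ f b - (w a b : EReal) := iInf_le (fun u' : {u' // A a u'} => f u' - (w a u' : EReal)) ⟨b, hab⟩
      have h2 := ih b z hpath
      calc f a ≤ f b - (w a b : EReal) := h1
        _ ≤ (init z - (pathValue w (b :: t) : EReal)) - (w a b : EReal) :=
            EReal.sub_le_sub h2 le_rfl
        _ = init z - (pathValue w (a :: b :: t) : EReal) := by
            rw [EReal.sub_sub_coe, add_comm, ← pathValue_cons]

/-- Correctness of the bottom-up threshold propagation (Algorithm 4): on a
finite acyclic graph, if `f` satisfies the local fixed-point equation
`f u = min (init u) (⨅_{A u u'} (f u' − w u u'))` (with `⨅ ∅ = ⊤` in `EReal`),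
then `f u` is the infimum, over all paths `q` starting at `u` with arbitrary
endpoint `z`, of `init z − value(q)`. -/
theorem threshold_propagation {V : Type*} [Fintype V] (A : V → V → Prop)
    (w : V → V → ℝ) (ρ : V → ℕ) (hρ : ∀ x y, A x y → ρ y < ρ x)
    (init f : V → EReal)
    (hf : ∀ u, f u = min (init u) (⨅ u' : {u' // A u u'}, (f u' - (w u u' : EReal)))) :
    ∀ u, f u = ⨅ z, ⨅ q : {q : List V // IsPath A u z q},
      (init z - (pathValue w q : EReal)) := by
  have key : ∀ n : ℕ, ∀ u : V, ρ u < n → f u = ⨅ z, ⨅ q : {q : List V // IsPath A u z q},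
      (init z - (pathValue w q : EReal)) := by
    intro n
    induction n with
    | zero => intro u hu; omega
    | succ n ih =>
      intro u hu
      apply le_antisymm
      · exact le_iInf fun z => le_iInf fun q => f_le_path A w init f hf q u z q.2
      · rw [hf u]
        apply le_min
        · have : IsPath A u u [u] := ⟨by simp, by simp, by simp, List.isChain_singleton u⟩
          refine (iInf_le _ u).trans ((iInf_le _ ⟨[u], this⟩).trans ?_)
          simp [pathValue]
        · refine le_iInf fun ⟨u', hA⟩ => ?_
          have hru' : ρ u' < n := by have := hρ u u' hA; omega
          rw [ih u' hru', EReal.iInf_sub_coe]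
          refine le_iInf fun z => ?_
          rw [EReal.iInf_sub_coe]
          refine le_iInf fun ⟨q, hq⟩ => ?_
          obtain ⟨hne, hh, hl, hc⟩ := hq
          match q, hne, hh, hl, hc with
          | b :: t, _, hh, hl, hc =>
            simp only [List.head?_cons, Option.some.injEq] at hh
            have hpath : IsPath A u z (u :: b :: t) :=
              ⟨by simp, by simp, by rw [← hl]; simp [List.getLast?_cons_cons],
               List.isChain_cons_cons.2 ⟨hh ▸ hA, hc⟩⟩
            refine (iInf_le _ z).trans ((iInf_le _ ⟨u :: b :: t, hpath⟩).trans ?_)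
            rw [pathValue_cons, EReal.sub_sub_coe, add_comm (pathValue w (b :: t)), hh]
  exact fun u => key (ρ u + 1) u (by omega)
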